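/- Let $\Sigma$ be an alphabet with $s \geq 2$ characters, $\sigma \in \Sigma$, and $w \geq d \geq 1$. The condensed $d$-neighborhood of the unary word $\sigma^w$ has exactly $\sum_{m=w-d}^{w} \binom{m-1}{d+m-w}(s-1)^{d+m-w}$ elements. -/

import Mathlib

structure Levenshtein.Cost (α β δ : Type*) where
  delete : α → δ
  insert : β → δ
  substitute : α → β → δ

def Levenshtein.defaultCost {α : Type*} [DecidableEq α] : Levenshtein.Cost α α ℕ where
  delete _ := 1
  insert _ := 1
  substitute a b := if a = b then 0 else 1

def Levenshtein.impl {α β δ : Type*} [AddZeroClass δ] [Min δ]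
    (C : Levenshtein.Cost α β δ) (xs : List α) (y : β) (d : {r : List δ // 0 < r.length}) :
    {r : List δ // 0 < r.length} :=
  let ⟨ds, w⟩ := d
  xs.zip (ds.zip ds.tail) |>.foldr
    (init := ⟨[C.insert y + ds.getLast (List.length_pos_iff.mp w)], by simp⟩)
    (fun ⟨x, d₀, d₁⟩ ⟨r, w⟩ =>
      ⟨min (C.delete x + r[0]) (min (C.insert y + d₀) (C.substitute x y + d₁)) :: r, by simp⟩)

def suffixLevenshtein {α β δ : Type*} [AddZeroClass δ] [Min δ]
    (C : Levenshtein.Cost α β δ) (xs : List α) (ys : List β) :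
    {r : List δ // 0 < r.length} :=
  ys.foldr
    (Levenshtein.impl C xs)
    (xs.foldr (init := ⟨[0], by simp⟩) (fun a ⟨r, w⟩ => ⟨(C.delete a + r[0]) :: r, by simp⟩))

def levenshtein {α β δ : Type*} [AddZeroClass δ] [Min δ]
    (C : Levenshtein.Cost α β δ) (xs : List α) (ys : List β) : δ :=
  let ⟨r, w⟩ := suffixLevenshtein C xs ys
  r[0]

section LevAux
variable {α β δ : Type*} [AddZeroClass δ] [Min δ] (C : Levenshtein.Cost α β δ)

theorem Levenshtein.impl_length_aux (xs : List α) (y : β) (d : {r : List δ // 0 < r.length})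
    (w : d.1.length = xs.length + 1) :
    (Levenshtein.impl C xs y d).1.length = xs.length + 1 := by
  induction xs generalizing d with
  | nil => rfl
  | cons x xs ih =>
    dsimp [Levenshtein.impl]
    match d, w with
    | ⟨d₁ :: d₂ :: ds, _⟩, w =>
      dsimp
      congr 1
      exact ih ⟨d₂ :: ds, (by simp)⟩ (by simpa using w)

theorem suffixLevenshtein_length_aux (xs : List α) (ys : List β) :
    (suffixLevenshtein C xs ys).1.length = xs.length + 1 := by
  induction ys with
  | nil =>
    dsimp [suffixLevenshtein]
    induction xs with
    | nil => rfl
    | cons _ xs ih => simp_all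
  | cons y ys ih =>
    dsimp [suffixLevenshtein]
    rw [Levenshtein.impl_length_aux]
    exact ih

omit [AddZeroClass δ] [Min δ] in
theorem suffixLevenshtein_cons₁_aux' {x y : {r : List δ // 0 < r.length}}
    (w₀ : x.1[0]'x.2 = y.1[0]'y.2) (w : x.1.tail = y.1.tail) : x = y := by
  match x, y with
  | ⟨hx :: tx, _⟩, ⟨hy :: ty, _⟩ => simp_all

theorem Levenshtein.impl_cons_aux (x : α) (xs : List α) (y : β) (d : δ) (ds : List δ) (w)
    (w' : 0 < List.length ds) :
    Levenshtein.impl C (x :: xs) y ⟨d :: ds, w⟩ =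
      let ⟨r, w⟩ := Levenshtein.impl C xs y ⟨ds, w'⟩
      ⟨min (C.delete x + r[0]) (min (C.insert y + d) (C.substitute x y + ds[0])) :: r, by simp⟩ :=
  match ds, w' with | _ :: _, _ => rfl

theorem suffixLevenshtein_cons₁' (x : α) (xs : List α) (ys : List β) :
    suffixLevenshtein C (x :: xs) ys =
      ⟨levenshtein C (x :: xs) ys ::
        (suffixLevenshtein C xs ys).1, by simp⟩ := by
  induction ys with
  | nil => rfl
  | cons y ys ih =>
    apply suffixLevenshtein_cons₁_aux'
    · rfl
    · show (Levenshtein.impl C (x :: xs) y (suffixLevenshtein C (x :: xs) ys)).1.tail = _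
      rw [ih, Levenshtein.impl_cons_aux]
      · rfl
      · simp [suffixLevenshtein_length_aux]

@[simp] theorem levenshtein_nil_nil : levenshtein C [] [] = 0 := by
  simp [levenshtein, suffixLevenshtein]

theorem levenshtein_nil_cons (y : β) (ys : List β) :
    levenshtein C [] (y :: ys) = C.insert y + levenshtein C [] ys := by
  have h := suffixLevenshtein_length_aux C ([] : List α) ys
  unfold levenshtein
  rw [show suffixLevenshtein C [] (y :: ys) = Levenshtein.impl C [] y (suffixLevenshtein C [] ys)
    from rfl]
  generalize suffixLevenshtein C ([] : List α) ys = r at h ⊢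
  obtain ⟨r, hr⟩ := r
  simp only [List.length_nil, zero_add] at h
  obtain ⟨a, rfl⟩ := List.length_eq_one_iff.mp h
  rfl

theorem levenshtein_cons_nil (x : α) (xs : List α) :
    levenshtein C (x :: xs) [] = C.delete x + levenshtein C xs [] :=
  rfl

theorem levenshtein_cons_cons (x : α) (xs : List α) (y : β) (ys : List β) :
    levenshtein C (x :: xs) (y :: ys) =
      min (C.delete x + levenshtein C xs (y :: ys))
        (min (C.insert y + levenshtein C (x :: xs) ys)
          (C.substitute x y + levenshtein C xs ys)) := by
  have key : ∀ (d : δ) (ds : List δ) (w) (w' : 0 < ds.length),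
      (Levenshtein.impl C (x :: xs) y ⟨d :: ds, w⟩).1[0]'(Levenshtein.impl C (x :: xs) y ⟨d :: ds, w⟩).2 =
        min (C.delete x + (Levenshtein.impl C xs y ⟨ds, w'⟩).1[0]'(Levenshtein.impl C xs y ⟨ds, w'⟩).2)
          (min (C.insert y + d) (C.substitute x y + ds[0])) := by
    intro d ds w w'
    match ds, w' with | _ :: _, _ => rfl
  have hl : 0 < (suffixLevenshtein C xs ys).1.length := by simp [suffixLevenshtein_length_aux]
  unfold levenshtein
  rw [show suffixLevenshtein C (x :: xs) (y :: ys)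
    = Levenshtein.impl C (x :: xs) y (suffixLevenshtein C (x :: xs) ys) from rfl]
  simp only [suffixLevenshtein_cons₁' C x xs ys]
  rw [key _ _ _ hl]
  rfl

end LevAux

@[simp] theorem Levenshtein.defaultCost_delete' {α : Type*} [DecidableEq α] (a : α) :
    (Levenshtein.defaultCost : Levenshtein.Cost α α ℕ).delete a = 1 := rfl

@[simp] theorem Levenshtein.defaultCost_insert' {α : Type*} [DecidableEq α] (a : α) :
    (Levenshtein.defaultCost : Levenshtein.Cost α α ℕ).insert a = 1 := rfl

@[simp] theorem Levenshtein.defaultCost_substitute' {α : Type*} [DecidableEq α] (a b : α) :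
    (Levenshtein.defaultCost : Levenshtein.Cost α α ℕ).substitute a b = if a = b then 0 else 1 :=
  rfl


lemma lev_rep {α : Type*} [DecidableEq α] (σ : α) (U : List α) : ∀ (w : ℕ),
    levenshtein Levenshtein.defaultCost U (List.replicate w σ)
      = max U.length w - min (U.count σ) w := by
  induction U with
  | nil =>
    intro w
    induction w with
    | zero => simp
    | succ w ih => rw [List.replicate_succ, levenshtein_nil_cons, ih]; simp; omega
  | cons x xs IH =>
    intro w
    induction w with
    | zero =>
      rw [List.replicate_zero, levenshtein_cons_nil]
      have := IH 0
      rw [List.replicate_zero] at this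
      rw [this]
      simp [List.count_cons]; omega
    | succ w ihw =>
      have h1 := IH (w + 1)
      rw [List.replicate_succ] at h1 ⊢
      rw [levenshtein_cons_cons, h1, IH w, ihw]
      have hc : xs.count σ ≤ xs.length := List.count_le_length (a := σ) (l := xs)
      simp only [List.count_cons, List.length_cons, Levenshtein.defaultCost]
      by_cases hx : x = σ <;> simp [hx] <;> omega

def listsF (α : Type*) [Fintype α] [DecidableEq α] : ℕ → Finset (List α)
  | 0 => {[]}
  | l + 1 => Finset.univ.biUnion fun a : α => ((listsF α l).image (a :: ·))

lemma mem_listsF {α : Type*} [Fintype α] [DecidableEq α] {l : ℕ} {U : List α} :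
    U ∈ listsF α l ↔ U.length = l := by
  induction l generalizing U with
  | zero =>
    simp only [listsF, Finset.mem_singleton, List.length_eq_zero_iff]
  | succ l ih =>
    cases U with
    | nil => simp [listsF]
    | cons x xs =>
      simp only [listsF, Finset.mem_biUnion, Finset.mem_univ, Finset.mem_image, true_and,
        List.length_cons]
      constructor
      · rintro ⟨a, V, hV, h⟩
        cases h
        simp [ih.mp hV]
      · intro h
        exact ⟨x, xs, ih.mpr (by omega), rfl⟩

lemma card_count (α : Type*) [Fintype α] [DecidableEq α] (σ : α) : ∀ (l j : ℕ),
    ((listsF α l).filter fun U => U.count σ = j).card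
      = Nat.choose l j * (Fintype.card α - 1) ^ (l - j) := by
  intro l
  induction l with
  | zero =>
    intro j
    cases j with
    | zero => simp [listsF, Finset.filter_singleton]
    | succ j => simp [listsF, Finset.filter_singleton, Nat.choose_eq_zero_of_lt]
  | succ l ih =>
    intro j
    rw [show listsF α (l+1) = Finset.univ.biUnion fun a : α => ((listsF α l).image (a :: ·))
        from rfl, Finset.filter_biUnion, Finset.card_biUnion, ]
    · have hterm : ∀ a : α, ((((listsF α l).image (a :: ·)).filter fun U => U.count σ = j).card)
          = ((listsF α l).filter fun U => (a :: U).count σ = j).card := by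
        intro a
        rw [Finset.filter_image, Finset.card_image_of_injective _ List.cons_injective]
      have hne : ∀ a : α, a ≠ σ → ((listsF α l).filter fun U => (a :: U).count σ = j).card
          = Nat.choose l j * (Fintype.card α - 1) ^ (l - j) := by
        intro a ha
        rw [← ih j]
        congr 1
        apply Finset.filter_congr
        intro U _
        simp [List.count_cons, ha]
      calc (∑ a : α, ((((listsF α l).image (a :: ·)).filter fun U => U.count σ = j).card))
          = ∑ a : α, ((listsF α l).filter fun U => (a :: U).count σ = j).card := by
            exact Finset.sum_congr rfl fun a _ => hterm a
        _ = ((listsF α l).filter fun U => (σ :: U).count σ = j).card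
            + ∑ a ∈ Finset.univ.erase σ, ((listsF α l).filter fun U => (a :: U).count σ = j).card := by
            rw [← Finset.add_sum_erase _ _ (Finset.mem_univ σ)]
        _ = ((listsF α l).filter fun U => (σ :: U).count σ = j).card
            + (Fintype.card α - 1) * (Nat.choose l j * (Fintype.card α - 1) ^ (l - j)) := by
            congr 1
            rw [Finset.sum_congr rfl fun a ha => hne a (Finset.ne_of_mem_erase ha),
              Finset.sum_const, Finset.card_erase_of_mem (Finset.mem_univ σ), Finset.card_univ,
              smul_eq_mul]
        _ = Nat.choose (l+1) j * (Fintype.card α - 1) ^ (l + 1 - j) := by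
            cases j with
            | zero =>
              have : ((listsF α l).filter fun U => (σ :: U).count σ = 0) = ∅ := by
                apply Finset.filter_false_of_mem
                intro U _
                simp [List.count_cons]
              rw [this]
              simp [pow_succ]
              ring
            | succ j =>
              have : ((listsF α l).filter fun U => (σ :: U).count σ = j + 1)
                  = ((listsF α l).filter fun U => U.count σ = j) := by
                apply Finset.filter_congr
                intro U _
                simp [List.count_cons]
              rw [this, ih j]
              rcases lt_trichotomy j l with h | h | h
              · have h1 : l - j = (l - (j+1)) + 1 := by omega
                have h2 : l + 1 - (j + 1) = l - j := by omega
                rw [h2, Nat.choose_succ_succ, h1, pow_succ]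
                generalize (Fintype.card α - 1) ^ (l - (j + 1)) = y
                ring
              · subst h
                rw [Nat.choose_self, Nat.choose_self, Nat.choose_succ_self]
                simp
              · rw [Nat.choose_eq_zero_of_lt (by omega), Nat.choose_eq_zero_of_lt (by omega),
                  Nat.choose_eq_zero_of_lt (by omega)]
                simp
    · intro a _ b _ hab
      apply Finset.disjoint_left.mpr
      intro U hU hU'
      simp only [Finset.mem_filter, Finset.mem_image] at hU hU'
      obtain ⟨⟨V, _, rfl⟩, _⟩ := hU
      obtain ⟨⟨V', _, hV'⟩, _⟩ := hU'
      injection hV' with h1 _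
      exact hab h1.symm

theorem stmt_13 {α : Type*} [Fintype α] [DecidableEq α] (s : ℕ)
    (hcard : Fintype.card α = s) (hs : 2 ≤ s)
    (σ : α) (w d : ℕ) (hd : 1 ≤ d) (hdw : d ≤ w) :
    {U : List α | levenshtein Levenshtein.defaultCost U (List.replicate w σ) ≤ d ∧
        ∀ P : List α, P <+: U → P ≠ U →
          ¬ levenshtein Levenshtein.defaultCost P (List.replicate w σ) ≤ d}.ncard
      = ∑ m ∈ Finset.Icc (w - d) w,
          Nat.choose (m - 1) (d + m - w) * (s - 1) ^ (d + m - w) := by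
  classical
  by_cases hdweq : d = w
  · -- case d = w : the condensed neighborhood is {[]}
    have hS : {U : List α | levenshtein Levenshtein.defaultCost U (List.replicate w σ) ≤ d ∧
        ∀ P : List α, P <+: U → P ≠ U →
          ¬ levenshtein Levenshtein.defaultCost P (List.replicate w σ) ≤ d} = {[]} := by
      ext U
      simp only [Set.mem_setOf_eq, Set.mem_singleton_iff]
      constructor
      · rintro ⟨h1, h2⟩
        by_contra hne
        exact h2 [] List.nil_prefix (fun h => hne h.symm)
          (by rw [lev_rep]; simp; omega)
      · rintro rfl
        refine ⟨by rw [lev_rep]; simp; omega, ?_⟩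
        intro P hP hne
        exact absurd (List.prefix_nil.mp hP) hne
    rw [hS, Set.ncard_singleton]
    subst hdweq
    rw [Finset.sum_eq_single 0]
    · simp
    · intro m _ hm
      rw [Nat.choose_eq_zero_of_lt (by omega)]
      exact Nat.zero_mul _
    · intro h
      simp at h
  · -- case d < w
    have hdlt : d < w := lt_of_le_of_ne hdw hdweq
    set k := w - d with hk
    have hk1 : 1 ≤ k := by omega
    have key : {U : List α | levenshtein Levenshtein.defaultCost U (List.replicate w σ) ≤ d ∧
        ∀ P : List α, P <+: U → P ≠ U →
          ¬ levenshtein Levenshtein.defaultCost P (List.replicate w σ) ≤ d}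
        = ↑((Finset.Icc k w).biUnion fun m =>
            ((listsF α (m-1)).filter fun V => V.count σ = k-1).image (· ++ [σ])) := by
      ext U
      simp only [Set.mem_setOf_eq, Finset.coe_biUnion, Set.mem_iUnion, Finset.mem_coe,
        Finset.mem_image, Finset.mem_filter, Finset.mem_Icc, mem_listsF, exists_prop]
      constructor
      · rintro ⟨h1, h2⟩
        rw [lev_rep] at h1
        have hUne : U ≠ [] := by
          rintro rfl
          simp at h1
          omega
        have hpos : 0 < U.length := List.length_pos_iff.mpr hUne
        have hdne : U.dropLast ≠ U := by
          intro heq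
          have := congrArg List.length heq
          rw [List.length_dropLast] at this
          omega
        have hdp := h2 U.dropLast (List.dropLast_prefix U) hdne
        rw [lev_rep] at hdp
        rw [List.length_dropLast] at hdp
        have hsplit : U.dropLast ++ [U.getLast hUne] = U := List.dropLast_append_getLast hUne
        have hcount : U.count σ
            = U.dropLast.count σ + (if U.getLast hUne = σ then 1 else 0) := by
          conv_lhs => rw [← hsplit]
          rw [List.count_append]
          by_cases hl : U.getLast hUne = σ <;> simp [hl, List.count_singleton']
        have hcl : U.dropLast.count σ ≤ U.dropLast.length := List.count_le_length (a := σ) (l := U.dropLast)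
        rw [List.length_dropLast] at hcl
        by_cases hl : U.getLast hUne = σ
        · rw [if_pos hl] at hcount
          have hgoal : U.count σ = k ∧ U.length ≤ w := by omega
          refine ⟨U.length, ⟨by omega, hgoal.2⟩, U.dropLast, ⟨by rw [List.length_dropLast],
            by omega⟩, ?_⟩
          rw [← hl]
          exact hsplit
        · rw [if_neg hl] at hcount
          exfalso
          omega
      · rintro ⟨m, hm, V, ⟨hVlen, hVc⟩, rfl⟩
        have hVl : V.length = m - 1 := hVlen
        have hUlen : (V ++ [σ]).length = m := by
          simp [hVl]
          omega
        have hUcount : (V ++ [σ]).count σ = k := by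
          rw [List.count_append, hVc]
          simp
          omega
        constructor
        · rw [lev_rep, hUlen, hUcount]
          omega
        · intro P hP hne
          rw [lev_rep]
          have hPlt : P.length < m := by
            rcases lt_or_eq_of_le (hP.length_le.trans_eq hUlen) with h | h
            · exact h
            · exact absurd (hP.eq_of_length (by rw [hUlen, h])) hne
          have hPV : P <+: V :=
            List.prefix_of_prefix_length_le hP (List.prefix_append V [σ]) (by omega)
          have hPc : P.count σ ≤ k - 1 := hVc ▸ (hPV.sublist.count_le σ)
          have hPlen : P.length ≤ V.length := hPV.length_le
          omega
    rw [key, Set.ncard_coe_finset, Finset.card_biUnion]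
    · rw [← hcard]
      refine Finset.sum_congr rfl fun m hm => ?_
      rw [Finset.mem_Icc] at hm
      rw [Finset.card_image_of_injective _ (List.append_left_injective [σ]), card_count]
      have h1 : (m - 1) - (k - 1) = d + m - w := by omega
      have h2 : k - 1 ≤ m - 1 := by omega
      rw [← Nat.choose_symm h2, h1]
    · intro a ha b hb hab
      apply Finset.disjoint_left.mpr
      intro U hU hU'
      rw [Finset.mem_coe, Finset.mem_Icc] at ha hb
      simp only [Finset.mem_image, Finset.mem_filter, mem_listsF] at hU hU'
      obtain ⟨V, ⟨hVl, _⟩, rfl⟩ := hU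
      obtain ⟨V', ⟨hVl', _⟩, h⟩ := hU'
      have := congrArg List.length h
      simp [hVl, hVl'] at this
      omega
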